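/- Sharpness of the uniqueness theorem (Lemma 1): The condition 16·a·b·t₀² > 1 cannot be relaxed to equality. Precisely, there exist a measurable function f : ℝⁿ → ℂ not almost everywhere zero and constants A, B > 0 such that |f(x)| ≤ A·e^{−|x|²} for all x, and the function u(x,1) = ∫_{ℝⁿ} e^{i|x−y|²/4} f(y) dy satisfies |u(x,1)| ≤ B·e^{−|x|²/16} for all x ∈ ℝⁿ (so a = 1, b = 1/16, t₀ = 1 and 16abt₀² = 1). One may take f(x) = e^{−|x|² − i|x|²/4}. -/

import Mathlib

open MeasureTheory Real

open scoped RealInnerProductSpace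

/-- Sharpness of the uniqueness theorem (Lemma 1): at `16abt₀² = 1`
(with `a = 1`, `b = 1/16`, `t₀ = 1`) uniqueness fails; one may take
`f(x) = e^{−|x|² − i|x|²/4}`. -/
theorem schrodinger_uniqueness_sharp {n : ℕ} (hn : 1 ≤ n) :
    ∃ (f : EuclideanSpace ℝ (Fin n) → ℂ) (A B : ℝ),
      Measurable f ∧ ¬ (f =ᵐ[volume] 0) ∧ 0 < A ∧ 0 < B ∧
      (∀ x : EuclideanSpace ℝ (Fin n), ‖f x‖ ≤ A * Real.exp (-‖x‖ ^ 2)) ∧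
      (∀ x : EuclideanSpace ℝ (Fin n),
        ‖∫ y, Complex.exp (Complex.I * (‖x - y‖ ^ 2 : ℝ) / 4) * f y‖
          ≤ B * Real.exp (-‖x‖ ^ 2 / 16)) := by
  set f : EuclideanSpace ℝ (Fin n) → ℂ :=
    fun x => Complex.exp (((-‖x‖^2 : ℝ) : ℂ) + ((-‖x‖^2/4 : ℝ) : ℂ) * Complex.I) with hf
  have hcont : Continuous f := by
    apply Complex.continuous_exp.comp
    fun_prop
  have key : ∀ x : EuclideanSpace ℝ (Fin n),
      (∫ y, Complex.exp (Complex.I * (‖x - y‖ ^ 2 : ℝ) / 4) * f y)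
        = Complex.exp (((‖x‖^2/4 : ℝ) : ℂ) * Complex.I) *
          (((π : ℂ) / 1) ^ ((n : ℂ)/2) * Complex.exp (((-‖x‖^2/16 : ℝ) : ℂ))) := by
    intro x
    have h1 : ∀ y : EuclideanSpace ℝ (Fin n),
        Complex.exp (Complex.I * (‖x - y‖ ^ 2 : ℝ) / 4) * f y
        = Complex.exp (((‖x‖^2/4 : ℝ) : ℂ) * Complex.I) *
          Complex.exp (-(1:ℂ) * (‖y‖:ℂ)^2 + (-(Complex.I)/2) * ((⟪x, y⟫ : ℝ) : ℂ)) := by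
      intro y
      rw [hf]
      rw [← Complex.exp_add, ← Complex.exp_add]
      congr 1
      have hns : (‖x - y‖^2 : ℝ) = ‖x‖^2 - 2*⟪x,y⟫ + ‖y‖^2 := by
        rw [@norm_sub_sq_real]
      rw [hns]
      push_cast
      ring
    calc (∫ y, Complex.exp (Complex.I * (‖x - y‖ ^ 2 : ℝ) / 4) * f y)
        = ∫ y : EuclideanSpace ℝ (Fin n), Complex.exp (((‖x‖^2/4 : ℝ) : ℂ) * Complex.I) *
            Complex.exp (-(1:ℂ) * (‖y‖:ℂ)^2 + (-(Complex.I)/2) * ((⟪x, y⟫ : ℝ) : ℂ)) := by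
          exact integral_congr_ae (Filter.Eventually.of_forall h1)
      _ = Complex.exp (((‖x‖^2/4 : ℝ) : ℂ) * Complex.I) *
            ∫ y : EuclideanSpace ℝ (Fin n),
              Complex.exp (-(1:ℂ) * (‖y‖:ℂ)^2 + (-(Complex.I)/2) * ((⟪x, y⟫ : ℝ) : ℂ)) :=
          integral_const_mul _ _
      _ = _ := by
          rw [GaussianFourier.integral_cexp_neg_mul_sq_norm_add (by norm_num) (-(Complex.I)/2) x]
          congr 1
          rw [finrank_euclideanSpace_fin]
          congr 1
          push_cast
          have : (-(Complex.I)/2)^2 = -(1/4 : ℂ) := by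
            rw [div_pow, neg_pow, Complex.I_sq]
            norm_num
          rw [this]
          ring
  refine ⟨f, 1, π ^ ((n : ℝ)/2), hcont.measurable, ?_, one_pos,
    Real.rpow_pos_of_pos Real.pi_pos _, ?_, ?_⟩
  · intro h
    have := (Continuous.ae_eq_iff_eq volume hcont continuous_const).mp h
    have h0 : f 0 = 0 := by rw [this]; rfl
    rw [hf] at h0
    exact Complex.exp_ne_zero _ h0
  · intro x
    rw [hf]
    simp only [Complex.exp_add, norm_mul, Complex.norm_exp_ofReal_mul_I, mul_one,
      Complex.norm_exp]
    simp [← Complex.ofReal_pow]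
  · intro x
    rw [key x]
    rw [norm_mul, Complex.norm_exp_ofReal_mul_I, one_mul, norm_mul]
    rw [div_one]
    have h1 : ‖((π : ℂ)) ^ ((n : ℂ)/2)‖ = π ^ ((n : ℝ)/2) := by
      rw [Complex.norm_cpow_eq_rpow_re_of_pos Real.pi_pos]
      norm_num
    have h2 : ‖Complex.exp (((-‖x‖^2/16 : ℝ) : ℂ))‖ = Real.exp (-‖x‖^2/16) := by
      rw [Complex.norm_exp]
      simp [← Complex.ofReal_pow]
    rw [h1, h2]
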